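/- Let a, β, T, η > 0 with σ_k > 0 and μ_k ∈ ℝ. Set μ̃ := μ_k/(1+aT) and σ̃² := σ_k²/(1+aT)² + 2βT/(1+aT). Then the pushforward of the Gaussian measure N(μ_k, σ_k²) on ℝ under the affine map x ↦ (1 − aη)x + ηβ·(x − μ̃)/σ̃² is the Gaussian measure N(μ_{k+1}, σ_{k+1}²), where μ_{k+1} = (1 − aη + ηβ·aT(1+aT)/(σ_k² + 2βT(1+aT)))·μ_k and σ_{k+1}² = (1 − aη + ηβ·(1+aT)²/(σ_k² + 2βT(1+aT)))²·σ_k². -/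

import Mathlib

/-- One BRWP step for the quadratic potential `V(x) = a x²/2`: the pushforward
of `N(μ_k, σ_k²)` under the affine map `x ↦ (1 − aη)x + ηβ(x − μ̃)/σ̃²`, where
`μ̃ = μ_k/(1+aT)` and `σ̃² = σ_k²/(1+aT)² + 2βT/(1+aT)`, is the Gaussian
`N(μ_{k+1}, σ_{k+1}²)` with
`μ_{k+1} = (1 − aη + ηβ aT(1+aT)/(σ_k² + 2βT(1+aT))) μ_k` and
`σ_{k+1}² = (1 − aη + ηβ(1+aT)²/(σ_k² + 2βT(1+aT)))² σ_k²`. -/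
theorem stmt_18 (a β T η σk μk μt σt2 : ℝ)
    (ha : 0 < a) (hβ : 0 < β) (hT : 0 < T) (hη : 0 < η) (hσk : 0 < σk)
    (hμt : μt = μk / (1 + a * T))
    (hσt2 : σt2 = σk ^ 2 / (1 + a * T) ^ 2 + 2 * β * T / (1 + a * T)) :
    MeasureTheory.Measure.map (fun x => (1 - a * η) * x + η * β * (x - μt) / σt2)
        (ProbabilityTheory.gaussianReal μk (σk ^ 2).toNNReal)
      = ProbabilityTheory.gaussianReal
          ((1 - a * η + η * β * (a * T * (1 + a * T)) / (σk ^ 2 + 2 * β * T * (1 + a * T)))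
            * μk)
          (((1 - a * η + η * β * (1 + a * T) ^ 2 / (σk ^ 2 + 2 * β * T * (1 + a * T))) ^ 2
            * σk ^ 2).toNNReal) := by
  have h1 : (0:ℝ) < 1 + a * T := by positivity
  have hD : (0:ℝ) < σk ^ 2 + 2 * β * T * (1 + a * T) := by positivity
  have hσt2pos : 0 < σt2 := by rw [hσt2]; positivity
  set c : ℝ := 1 - a * η + η * β * (1 + a * T) ^ 2 / (σk ^ 2 + 2 * β * T * (1 + a * T)) with hc
  set m : ℝ := (1 - a * η + η * β * (a * T * (1 + a * T))
      / (σk ^ 2 + 2 * β * T * (1 + a * T))) * μk with hm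
  have hfun : (fun x : ℝ => (1 - a * η) * x + η * β * (x - μt) / σt2)
      = (fun x => x + (m - c * μk)) ∘ (fun x => c * x) := by
    funext x
    have hσt2' : σt2 * (1 + a * T) ^ 2 = σk ^ 2 + 2 * β * T * (1 + a * T) := by
      rw [hσt2]; field_simp
    simp only [Function.comp, hc, hm, hμt, hσt2]
    field_simp
    ring
  rw [hfun, ← MeasureTheory.Measure.map_map (by fun_prop) (by fun_prop),
    ProbabilityTheory.gaussianReal_map_const_mul,
    ProbabilityTheory.gaussianReal_map_add_const]
  congr 1
  · ring
  · ext
    simp [Real.coe_toNNReal _ (by positivity : (0:ℝ) ≤ σk ^ 2),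
      Real.coe_toNNReal _ (by positivity : (0:ℝ) ≤ c ^ 2 * σk ^ 2)]
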